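/- Let (X⁰_t) be a martingale difference sequence with conditional variances v_t satisfying Σ_{t≥1} E[|v_t − 1|]/t < ∞, and let S⁰_t = Σ_{s≤t} X⁰_s. Then for any almost surely finite stopping time τ, E[(S⁰_τ)²/τ] ≤ log E[τ] + O(1); in particular E[(S⁰_τ)²/τ] ≤ E[Σ_{s=1}^τ v_s/s] ≤ E[log τ] + Σ_{s≥1} E[|v_s − 1|]/s + 1. -/

import Mathlib

open MeasureTheory Filter Finset

lemma aux_meas_stopped {Ω : Type*} {m : MeasurableSpace Ω} {f : ℕ → Ω → ℝ}
    (hf : ∀ n, Measurable (f n)) {σ : Ω → ℕ} (hσ : Measurable σ) :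
    Measurable (fun ω => f (σ ω) ω) := by
  have h : (fun ω => f (σ ω) ω)
      = (fun p : Ω × ℕ => f p.2 p.1) ∘ (fun ω => (ω, σ ω)) := rfl
  rw [h]
  have h2 : Measurable (fun p : Ω × ℕ => f p.2 p.1) :=
    measurable_from_prod_countable_left (fun n => hf n)
  exact h2.comp (measurable_id.prodMk hσ)

lemma aux_harmonic (n : ℕ) : ∑ s ∈ Finset.Icc 1 n, (1 : ℝ) / s ≤ Real.log n + 1 := by
  have h := harmonic_le_one_add_log n
  rw [harmonic_eq_sum_Icc] at h
  push_cast at h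
  simp only [one_div]
  linarith

lemma aux_abs_mul_le (x y : ℝ) : |x * y| ≤ (x ^ 2 + y ^ 2) / 2 := by
  rw [abs_mul]
  nlinarith [sq_nonneg (|x| - |y|), sq_abs x, sq_abs y, abs_nonneg x, abs_nonneg y]

lemma aux_log {Ω : Type*} {m : MeasurableSpace Ω} (μ : Measure Ω) [IsProbabilityMeasure μ]
    (τ : Ω → ℕ) (hτm : Measurable τ) (hτ1 : ∀ ω, 1 ≤ τ ω)
    (hτint : Integrable (fun ω => (τ ω : ℝ)) μ) :
    Integrable (fun ω => Real.log (τ ω : ℝ)) μ ∧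
      ∫ ω, Real.log (τ ω : ℝ) ∂μ ≤ Real.log (∫ ω, (τ ω : ℝ) ∂μ) := by
  have hτ1' : ∀ ω, (1 : ℝ) ≤ (τ ω : ℝ) := fun ω => by exact_mod_cast hτ1 ω
  have hmeas : Measurable (fun ω => Real.log (τ ω : ℝ)) :=
    (measurable_from_top (f := fun n : ℕ => Real.log (n : ℝ))).comp hτm
  have hlog_nonneg : ∀ ω, 0 ≤ Real.log (τ ω : ℝ) := fun ω => Real.log_nonneg (hτ1' ω)
  have hlog_le : ∀ ω, Real.log (τ ω : ℝ) ≤ (τ ω : ℝ) := fun ω =>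
    (Real.log_le_sub_one_of_pos (by linarith [hτ1' ω])).trans (by linarith)
  have hint : Integrable (fun ω => Real.log (τ ω : ℝ)) μ := by
    refine Integrable.mono' hτint hmeas.aestronglyMeasurable (ae_of_all _ fun ω => ?_)
    rw [Real.norm_eq_abs, abs_of_nonneg (hlog_nonneg ω)]
    exact hlog_le ω
  refine ⟨hint, ?_⟩
  set c : ℝ := ∫ ω, (τ ω : ℝ) ∂μ with hc
  have hc1 : 1 ≤ c := by
    have : ∫ _ : Ω, (1 : ℝ) ∂μ ≤ c := integral_mono (integrable_const 1) hτint hτ1'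
    simpa using this
  have hcpos : 0 < c := by linarith
  have hbound : ∀ ω, Real.log (τ ω : ℝ) ≤ Real.log c + ((τ ω : ℝ) / c - 1) := by
    intro ω
    have h1 : Real.log ((τ ω : ℝ) / c) ≤ (τ ω : ℝ) / c - 1 :=
      Real.log_le_sub_one_of_pos (div_pos (by linarith [hτ1' ω]) hcpos)
    rw [Real.log_div (by linarith [hτ1' ω]) (ne_of_gt hcpos)] at h1
    linarith
  have hgint : Integrable (fun ω => Real.log c + ((τ ω : ℝ) / c - 1)) μ :=
    (integrable_const _).add ((hτint.div_const c).sub (integrable_const 1))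
  calc ∫ ω, Real.log (τ ω : ℝ) ∂μ
      ≤ ∫ ω, (Real.log c + ((τ ω : ℝ) / c - 1)) ∂μ :=
        integral_mono hint hgint hbound
    _ = Real.log c + ((∫ ω, (τ ω : ℝ) ∂μ) / c - 1) := by
        have h1 : Integrable (fun ω => (τ ω : ℝ) / c - 1) μ :=
          (hτint.div_const c).sub (integrable_const 1)
        rw [integral_add (integrable_const _) h1,
          integral_sub (hτint.div_const c) (integrable_const 1), integral_div]
        simp
    _ = Real.log c := by
        rw [← hc, div_self (ne_of_gt hcpos)]
        ring

lemma aux_sm_div {Ω : Type*} {m' : MeasurableSpace Ω} {f : Ω → ℝ} (hf : StronglyMeasurable[m'] f)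
    (c : ℝ) : StronglyMeasurable[m'] (fun ω => f ω / c) := by
  simpa [div_eq_mul_inv] using hf.mul_const c⁻¹

/-- For a martingale difference sequence `(X⁰_t)` with conditional variances
`v_t = E[(X⁰_t)² | F_{t−1}]` satisfying `Σ_t E[|v_t − 1|]/t < ∞`, and any (a.s. finite,
here `ℕ`-valued) stopping time `τ ≥ 1` with finite mean,
`E[(S⁰_τ)²/τ] ≤ E[Σ_{s=1}^τ v_s/s] ≤ E[log τ] + Σ_{s≥1} E[|v_s − 1|]/s + 1`, and
`E[log τ] ≤ log E[τ]`, so that `E[(S⁰_τ)²/τ] ≤ log E[τ] + O(1)`. -/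
theorem expectation_stopped_sq_over_tau {Ω : Type*} {m : MeasurableSpace Ω}
    (μ : Measure Ω) [IsProbabilityMeasure μ] (ℱ : Filtration ℕ m)
    (X : ℕ → Ω → ℝ)
    (hadapt : ∀ s, StronglyMeasurable[ℱ s] (X s))
    (hint : ∀ s, Integrable (fun ω => (X s ω)^2) μ)
    (hmds : ∀ s, 1 ≤ s → μ[X s | ℱ (s - 1)] =ᵐ[μ] 0)
    (hsum : Summable (fun s : ℕ =>
      (∫ ω, |(μ[fun ω' => (X s ω')^2 | ℱ (s - 1)]) ω - 1| ∂μ) / (s : ℝ)))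
    (τ : Ω → ℕ) (hτ : IsStoppingTime ℱ (fun ω => (τ ω : WithTop ℕ))) (hτ1 : ∀ ω, 1 ≤ τ ω)
    (hτint : Integrable (fun ω => (τ ω : ℝ)) μ) :
    (∫ ω, (∑ s ∈ Finset.Icc 1 (τ ω), X s ω)^2 / (τ ω : ℝ) ∂μ)
      ≤ (∫ ω, ∑ s ∈ Finset.Icc 1 (τ ω),
          (μ[fun ω' => (X s ω')^2 | ℱ (s - 1)]) ω / (s : ℝ) ∂μ) ∧
    (∫ ω, ∑ s ∈ Finset.Icc 1 (τ ω),
        (μ[fun ω' => (X s ω')^2 | ℱ (s - 1)]) ω / (s : ℝ) ∂μ)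
      ≤ (∫ ω, Real.log (τ ω : ℝ) ∂μ)
        + (∑' s : ℕ,
            (∫ ω, |(μ[fun ω' => (X s ω')^2 | ℱ (s - 1)]) ω - 1| ∂μ) / (s : ℝ)) + 1 ∧
    (∫ ω, Real.log (τ ω : ℝ) ∂μ) ≤ Real.log (∫ ω, (τ ω : ℝ) ∂μ) := by
  classical
  -- abbreviations
  set v : ℕ → Ω → ℝ := fun s => μ[fun ω' => (X s ω')^2 | ℱ (s - 1)] with hv
  set S : ℕ → Ω → ℝ := fun n ω => ∑ s ∈ Finset.Icc 1 n, X s ω with hSdef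
  set U : ℕ → Ω → ℝ := fun n ω => (S n ω)^2 / (n : ℝ) with hUdef
  set V : ℕ → Ω → ℝ := fun n ω => ∑ s ∈ Finset.Icc 1 n, v s ω / (s : ℝ) with hVdef
  set K : ℕ → Ω → ℝ := fun n ω => ∑ s ∈ Finset.Icc 1 n, |v s ω - 1| / (s : ℝ) with hKdef
  -- basic measurability / integrability
  have hXm : ∀ s, StronglyMeasurable (X s) := fun s => (hadapt s).mono (ℱ.le s)
  have hvm' : ∀ s, StronglyMeasurable[ℱ (s - 1)] (v s) := fun s => stronglyMeasurable_condExp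
  have hvm : ∀ s, StronglyMeasurable (v s) := fun s => (hvm' s).mono (ℱ.le _)
  have hvint : ∀ s, Integrable (v s) μ := fun s => integrable_condExp
  have hvnn : ∀ s, 0 ≤ᵐ[μ] v s := fun s =>
    condExp_nonneg (ae_of_all _ fun ω => sq_nonneg (X s ω))
  have hvallnn : ∀ᵐ ω ∂μ, ∀ s, 0 ≤ v s ω := ae_all_iff.2 hvnn
  have hX2 : ∀ s, MemLp (X s) 2 μ := fun s =>
    (memLp_two_iff_integrable_sq (hXm s).aestronglyMeasurable).mpr (hint s)
  have hXint : ∀ s, Integrable (X s) μ := fun s => (hX2 s).integrable one_le_two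
  have hSm : ∀ n, StronglyMeasurable (S n) := by
    intro n
    exact Finset.stronglyMeasurable_fun_sum _ fun i _ => hXm i
  have hS2 : ∀ n, MemLp (S n) 2 μ := fun n =>
    memLp_finset_sum _ (fun i _ => hX2 i)
  have hSsqint : ∀ n, Integrable (fun ω => (S n ω)^2) μ := fun n => (hS2 n).integrable_sq
  have hUm : ∀ n, Measurable (U n) := fun n =>
    (((hSm n).measurable.pow_const 2).div_const _)
  have hUint : ∀ n, Integrable (U n) μ := fun n => (hSsqint n).div_const _
  have hUnn : ∀ n ω, 0 ≤ U n ω := fun n ω => by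
    simp only [hUdef]
    positivity
  have hVm : ∀ n, Measurable (V n) := fun n =>
    Finset.measurable_sum _ fun i _ => ((hvm i).measurable.div_const _)
  have hVint : ∀ n, Integrable (V n) μ := fun n =>
    integrable_finset_sum _ fun i _ => (hvint i).div_const _
  have hKm : ∀ n, Measurable (K n) := fun n =>
    Finset.measurable_sum _ fun i _ => (((hvm i).measurable.sub measurable_const).abs.div_const _)
  have hτm : Measurable τ := by
    have hle : ∀ i, MeasurableSet {ω | τ ω ≤ i} := fun i => ℱ.le i _ (by simpa using hτ i)
    refine measurable_to_countable' fun i => ?_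
    cases i with
    | zero =>
      have h0 : τ ⁻¹' {0} = {ω | τ ω ≤ 0} := by ext ω; simp [Nat.le_zero]
      rw [h0]; exact hle 0
    | succ k =>
      have : τ ⁻¹' {k + 1} = {ω | τ ω ≤ k + 1} \ {ω | τ ω ≤ k} := by
        ext ω; simp [Nat.lt_succ_iff]; omega
      rw [this]
      exact (hle (k + 1)).diff (hle k)
  -- the supermartingale
  set 𝒢 : Filtration ℕ m :=
    { seq := fun t => ℱ (t + 1)
      mono' := fun i j hij => ℱ.mono (by omega)
      le' := fun t => ℱ.le _ } with h𝒢
  set Z : ℕ → Ω → ℝ := fun t ω => U (t + 1) ω - V (t + 1) ω with hZdef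
  have hZadapted : StronglyAdapted 𝒢 Z := by
    intro t
    have hS' : StronglyMeasurable[ℱ (t + 1)] (S (t + 1)) :=
      Finset.stronglyMeasurable_fun_sum _ fun i hi =>
        (hadapt i).mono (ℱ.mono (Finset.mem_Icc.mp hi).2)
    have hV' : StronglyMeasurable[ℱ (t + 1)] (V (t + 1)) :=
      Finset.stronglyMeasurable_fun_sum _ fun i hi =>
        aux_sm_div ((hvm' i).mono (ℱ.mono (by have := (Finset.mem_Icc.mp hi).2; omega))) _
    exact ((aux_sm_div (hS'.pow 2) _).sub hV')
  have hZint : ∀ t, Integrable (Z t) μ := fun t => (hUint (t + 1)).sub (hVint (t + 1))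
  have hSG : ∀ t, StronglyMeasurable[ℱ (t + 1)] (S (t + 1)) := fun t =>
    Finset.stronglyMeasurable_fun_sum _ fun i hi =>
      (hadapt i).mono (ℱ.mono (Finset.mem_Icc.mp hi).2)
  have hZsuper : Supermartingale Z 𝒢 μ := by
    refine supermartingale_nat hZadapted hZint fun t => ?_
    have ht1 : ((t : ℝ) + 1) ≠ 0 := by positivity
    have ht2 : ((t : ℝ) + 2) ≠ 0 := by positivity
    set c₁ : ℝ := -(1 / (((t : ℝ) + 1) * ((t : ℝ) + 2))) with hc₁
    set c₂ : ℝ := 2 / ((t : ℝ) + 2) with hc₂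
    set c₃ : ℝ := 1 / ((t : ℝ) + 2) with hc₃
    set P₁ : Ω → ℝ := fun ω => c₁ * (S (t + 1) ω)^2 with hP₁
    set B : Ω → ℝ := fun ω => S (t + 1) ω * X (t + 2) ω with hB
    set P₂ : Ω → ℝ := fun ω => c₂ * B ω with hP₂
    set C : Ω → ℝ := fun ω => (X (t + 2) ω)^2 with hC
    set P₃ : Ω → ℝ := fun ω => c₃ * C ω with hP₃
    set P₄ : Ω → ℝ := fun ω => -c₃ * v (t + 2) ω with hP₄
    have hZD' : Z (t + 1) = Z t + (P₁ + P₂ + P₃ + P₄) := by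
      funext ω
      have h1 : S (t + 2) ω = S (t + 1) ω + X (t + 2) ω := by
        show (∑ s ∈ Finset.Icc 1 (t + 1 + 1), X s ω) = _
        rw [Finset.sum_Icc_succ_top (by omega)]
      have h2 : V (t + 2) ω = V (t + 1) ω + v (t + 2) ω / ((t + 2 : ℕ) : ℝ) := by
        show (∑ s ∈ Finset.Icc 1 (t + 1 + 1), v s ω / _) = _
        rw [Finset.sum_Icc_succ_top (by omega)]
      simp only [Pi.add_apply, hZdef, hUdef, hP₁, hP₂, hP₃, hP₄, hB, hC, hc₁, hc₂, hc₃]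
      rw [show t + 1 + 1 = t + 2 from rfl, h1, h2]
      push_cast
      field_simp
      ring
    have hmle : (𝒢 t : MeasurableSpace Ω) ≤ m := 𝒢.le t
    have hBint : Integrable B μ := by
      refine Integrable.mono' (((hSsqint (t + 1)).add (hint (t + 2))).div_const 2)
        (((hSm (t + 1)).mul (hXm (t + 2))).aestronglyMeasurable) (ae_of_all _ fun ω => ?_)
      rw [Real.norm_eq_abs]
      exact aux_abs_mul_le _ _
    have hP₁int : Integrable P₁ μ := (hSsqint (t + 1)).const_mul _
    have hP₂int : Integrable P₂ μ := hBint.const_mul _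
    have hP₃int : Integrable P₃ μ := (hint (t + 2)).const_mul _
    have hP₄int : Integrable P₄ μ := (hvint (t + 2)).const_mul _
    have hXcond : μ[X (t + 2)|𝒢 t] =ᵐ[μ] 0 := hmds (t + 2) (by omega)
    have hB0 : μ[B|𝒢 t] =ᵐ[μ] (0 : Ω → ℝ) := by
      have h1 : μ[B|𝒢 t] =ᵐ[μ] fun ω => S (t + 1) ω * (μ[X (t + 2)|𝒢 t]) ω :=
        condExp_mul_of_stronglyMeasurable_left (hSG t) hBint (hXint (t + 2))
      refine h1.trans ?_
      filter_upwards [hXcond] with ω hω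
      show S (t + 1) ω * (μ[X (t + 2)|𝒢 t]) ω = 0
      rw [hω]; simp
    have hCv : μ[C|𝒢 t] = v (t + 2) := rfl
    have c1 : μ[Z t + (P₁ + P₂ + P₃ + P₄)|𝒢 t]
        =ᵐ[μ] μ[Z t|𝒢 t] + μ[P₁ + P₂ + P₃ + P₄|𝒢 t] :=
      condExp_add (hZint t) (((hP₁int.add hP₂int).add hP₃int).add hP₄int) _
    have c2 : μ[P₁ + P₂ + P₃ + P₄|𝒢 t] =ᵐ[μ] μ[P₁ + P₂ + P₃|𝒢 t] + μ[P₄|𝒢 t] :=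
      condExp_add ((hP₁int.add hP₂int).add hP₃int) hP₄int _
    have c3 : μ[P₁ + P₂ + P₃|𝒢 t] =ᵐ[μ] μ[P₁ + P₂|𝒢 t] + μ[P₃|𝒢 t] :=
      condExp_add (hP₁int.add hP₂int) hP₃int _
    have c4 : μ[P₁ + P₂|𝒢 t] =ᵐ[μ] μ[P₁|𝒢 t] + μ[P₂|𝒢 t] :=
      condExp_add hP₁int hP₂int _
    have e0 : μ[Z t|𝒢 t] = Z t :=
      condExp_of_stronglyMeasurable hmle (hZadapted t) (hZint t)
    have e1 : μ[P₁|𝒢 t] = P₁ :=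
      condExp_of_stronglyMeasurable hmle
        (((hSG t).pow 2).const_mul c₁) hP₁int
    have e4 : μ[P₄|𝒢 t] = P₄ :=
      condExp_of_stronglyMeasurable hmle
        ((stronglyMeasurable_condExp (m := ℱ (t + 1))).const_mul (-c₃)) hP₄int
    have s2 : μ[P₂|𝒢 t] =ᵐ[μ] c₂ • μ[B|𝒢 t] := condExp_smul c₂ B _
    have s3 : μ[P₃|𝒢 t] =ᵐ[μ] c₃ • μ[C|𝒢 t] := condExp_smul c₃ C _
    rw [hZD']
    filter_upwards [c1, c2, c3, c4, s2, s3, hB0] with ω h1 h2 h3 h4 h5 h6 h7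
    rw [h1]
    simp only [Pi.add_apply]
    rw [e0, h2]
    simp only [Pi.add_apply]
    rw [h3]
    simp only [Pi.add_apply]
    rw [h4]
    simp only [Pi.add_apply]
    rw [e1, e4, h5, h6, hCv]
    simp only [Pi.smul_apply, smul_eq_mul]
    rw [h7]
    simp only [Pi.zero_apply]
    have hsq : (0 : ℝ) ≤ (S (t + 1) ω)^2 := sq_nonneg _
    have hc₁neg : c₁ ≤ 0 := by
      rw [hc₁]
      have : 0 < ((t : ℝ) + 1) * ((t : ℝ) + 2) := by positivity
      simp only [neg_nonpos]
      positivity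
    have hP1le : P₁ ω ≤ 0 := mul_nonpos_of_nonpos_of_nonneg hc₁neg hsq
    simp only [Pi.add_apply, hP₄, Pi.zero_apply, smul_eq_mul]
    nlinarith [hP1le]
  -- optional stopping
  have hρ : IsStoppingTime 𝒢 (fun ω => ((τ ω - 1 : ℕ) : WithTop ℕ)) := by
    intro t
    have h : {ω | ((τ ω - 1 : ℕ) : WithTop ℕ) ≤ WithTop.some t}
        = {ω | ((τ ω : ℕ) : WithTop ℕ) ≤ WithTop.some (t + 1)} := by
      ext ω
      show ((τ ω - 1 : ℕ) : WithTop ℕ) ≤ WithTop.some t ↔ ((τ ω : ℕ) : WithTop ℕ) ≤ WithTop.some (t + 1)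
      rw [← WithTop.coe_natCast, ← WithTop.coe_natCast, WithTop.coe_le_coe, WithTop.coe_le_coe]
      simp only [Nat.cast_id]
      omega
    exact h ▸ hτ (t + 1)
  have hZ0 : ∫ ω, Z 0 ω ∂μ = 0 := by
    have h1 : ∫ ω, U 1 ω ∂μ = ∫ ω, (X 1 ω)^2 ∂μ := by
      congr 1; funext ω; simp [hUdef, hSdef]
    have h2 : ∫ ω, V 1 ω ∂μ = ∫ ω, (X 1 ω)^2 ∂μ := by
      have : ∫ ω, V 1 ω ∂μ = ∫ ω, v 1 ω ∂μ := by
        congr 1; funext ω; simp [hVdef]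
      rw [this, hv]
      exact integral_condExp (ℱ.le 0)
    rw [integral_sub (hUint 1) (hVint 1), h1, h2, sub_self]
  have hρmin : ∀ n : ℕ, IsStoppingTime 𝒢 (fun ω => ((min (τ ω - 1) n : ℕ) : WithTop ℕ)) := by
    intro n
    have h := hρ.min_const n
    have e : (fun ω => ((min (τ ω - 1) n : ℕ) : WithTop ℕ)) = fun ω => min ((τ ω - 1 : ℕ) : WithTop ℕ) (n : WithTop ℕ) := by
      funext ω; exact WithTop.coe_min _ _
    rw [e]; exact h
  have hstop : ∀ n : ℕ,
      ∫ ω, (U (min (τ ω) (n + 1)) ω - V (min (τ ω) (n + 1)) ω) ∂μ ≤ 0 := by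
    intro n
    have hsub := (hZsuper.neg).expected_stoppedValue_mono
      (isStoppingTime_const 𝒢 0) (hρmin n) (fun ω => WithTop.coe_le_coe.2 (Nat.zero_le _))
      (N := n) (fun ω => WithTop.coe_le_coe.2 (min_le_right _ _))
    have hidx : ∀ ω, min (τ ω - 1) n + 1 = min (τ ω) (n + 1) := fun ω => by
      have := hτ1 ω; omega
    have hlhs : stoppedValue (-Z) (fun _ => WithTop.some (0 : ℕ)) = fun ω => -(Z 0 ω) := rfl
    have hrhs : stoppedValue (-Z) (fun ω => ((min (τ ω - 1) n : ℕ) : WithTop ℕ))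
        = fun ω => -(U (min (τ ω) (n + 1)) ω - V (min (τ ω) (n + 1)) ω) := by
      funext ω
      show -(Z (min (τ ω - 1) n) ω) = _
      rw [hZdef]
      simp only
      rw [hidx ω]
    rw [hlhs, hrhs] at hsub
    have h1 : ∫ ω, -(Z 0 ω) ∂μ = -∫ ω, Z 0 ω ∂μ := integral_neg _
    have h2 : ∫ ω, -(U (min (τ ω) (n + 1)) ω - V (min (τ ω) (n + 1)) ω) ∂μ
        = -∫ ω, (U (min (τ ω) (n + 1)) ω - V (min (τ ω) (n + 1)) ω) ∂μ := integral_neg _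
    have hsub' : -∫ ω, Z 0 ω ∂μ ≤ -∫ ω, (U (min (τ ω) (n + 1)) ω - V (min (τ ω) (n + 1)) ω) ∂μ := by
      rw [← h1, ← h2]; exact hsub
    rw [hZ0] at hsub'
    linarith
  -- integrability of stopped processes
  have hUτn_int : ∀ n : ℕ, Integrable (fun ω => U (min (τ ω) (n + 1)) ω) μ := by
    intro n
    refine Integrable.mono' (g := fun ω => ∑ k ∈ Finset.Icc 1 (n + 1), U k ω)
      (integrable_finset_sum _ fun k _ => hUint k)
      ((aux_meas_stopped hUm (hτm.min measurable_const)).aestronglyMeasurable)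
      (ae_of_all _ fun ω => ?_)
    rw [Real.norm_eq_abs, abs_of_nonneg (hUnn _ ω)]
    exact Finset.single_le_sum (fun k _ => hUnn k ω)
      (Finset.mem_Icc.mpr ⟨le_min (hτ1 ω) (by omega), min_le_right _ _⟩)
  have hVτn_int : ∀ n : ℕ, Integrable (fun ω => V (min (τ ω) (n + 1)) ω) μ := by
    intro n
    refine Integrable.mono' (g := fun ω => ∑ s ∈ Finset.Icc 1 (n + 1), |v s ω| / s)
      (integrable_finset_sum _ fun s _ => ((hvint s).abs.div_const _))
      ((aux_meas_stopped hVm (hτm.min measurable_const)).aestronglyMeasurable)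
      (ae_of_all _ fun ω => ?_)
    rw [Real.norm_eq_abs]
    calc |V (min (τ ω) (n+1)) ω| ≤ ∑ s ∈ Finset.Icc 1 (min (τ ω) (n+1)), |v s ω / s| :=
          Finset.abs_sum_le_sum_abs _ _
      _ = ∑ s ∈ Finset.Icc 1 (min (τ ω) (n+1)), |v s ω| / s := by
          refine Finset.sum_congr rfl fun s _ => ?_
          rw [abs_div, Nat.abs_cast]
      _ ≤ ∑ s ∈ Finset.Icc 1 (n + 1), |v s ω| / s :=
          Finset.sum_le_sum_of_subset_of_nonneg
            (Finset.Icc_subset_Icc le_rfl (min_le_right _ _))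
            (fun s _ _ => by positivity)
  -- log integrability and Jensen
  obtain ⟨hlogint, hjensen⟩ := aux_log μ τ hτm hτ1 hτint
  -- the series
  set T : ℝ := ∑' s : ℕ, (∫ ω, |v s ω - 1| ∂μ) / (s : ℝ) with hT
  have hterm_int : ∀ s : ℕ, Integrable (fun ω => |v s ω - 1| / (s : ℝ)) μ := fun s =>
    ((hvint s).sub (integrable_const 1)).abs.div_const _
  have hterm_nn : ∀ (s : ℕ) (ω : Ω), 0 ≤ |v s ω - 1| / (s : ℝ) := fun s ω => by positivity
  have hterm_eq : ∀ s : ℕ, (∫ ω, |v s ω - 1| ∂μ) / (s : ℝ)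
      = ∫ ω, |v s ω - 1| / (s : ℝ) ∂μ := fun s => (integral_div _ _).symm
  have hsum' : Summable (fun s : ℕ => ∫ ω, |v s ω - 1| / (s : ℝ) ∂μ) := by
    refine hsum.congr fun s => hterm_eq s
  have hsum_nn : ∀ s : ℕ, 0 ≤ ∫ ω, |v s ω - 1| / (s : ℝ) ∂μ := fun s =>
    integral_nonneg (hterm_nn s)
  have hTnn : 0 ≤ T := by
    rw [hT]
    refine tsum_nonneg fun s => ?_
    rw [hterm_eq s]
    exact hsum_nn s
  have hofReal : ∀ s : ℕ, ∫⁻ ω, ENNReal.ofReal (|v s ω - 1| / (s : ℝ)) ∂μ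
      = ENNReal.ofReal (∫ ω, |v s ω - 1| / (s : ℝ) ∂μ) := fun s =>
    (ofReal_integral_eq_lintegral_ofReal (hterm_int s) (ae_of_all _ (hterm_nn s))).symm
  have hKnn : ∀ n ω, 0 ≤ K n ω := fun n ω =>
    Finset.sum_nonneg fun s _ => hterm_nn s ω
  have hKτm : Measurable (fun ω => K (τ ω) ω) := aux_meas_stopped hKm hτm
  have hKτ_lint : ∫⁻ ω, ENNReal.ofReal (K (τ ω) ω) ∂μ ≤ ENNReal.ofReal T := by
    have step1 : ∫⁻ ω, ENNReal.ofReal (K (τ ω) ω) ∂μ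
        ≤ ∫⁻ ω, ∑' s : ℕ, ENNReal.ofReal (|v s ω - 1| / (s : ℝ)) ∂μ := by
      refine lintegral_mono fun ω => ?_
      rw [hKdef]
      simp only
      rw [ENNReal.ofReal_sum_of_nonneg (fun s _ => hterm_nn s ω)]
      exact ENNReal.sum_le_tsum _
    have step2 : ∫⁻ ω, ∑' s : ℕ, ENNReal.ofReal (|v s ω - 1| / (s : ℝ)) ∂μ
        = ∑' s : ℕ, ∫⁻ ω, ENNReal.ofReal (|v s ω - 1| / (s : ℝ)) ∂μ :=
      lintegral_tsum fun s =>
        (ENNReal.measurable_ofReal.comp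
          (((hvm s).measurable.sub measurable_const).abs.div_const _)).aemeasurable
    have step3 : ∑' s : ℕ, ∫⁻ ω, ENNReal.ofReal (|v s ω - 1| / (s : ℝ)) ∂μ
        = ENNReal.ofReal T := by
      rw [tsum_congr hofReal]
      rw [hT, tsum_congr hterm_eq]
      exact (ENNReal.ofReal_tsum_of_nonneg hsum_nn hsum').symm
    calc ∫⁻ ω, ENNReal.ofReal (K (τ ω) ω) ∂μ
        ≤ ∫⁻ ω, ∑' s : ℕ, ENNReal.ofReal (|v s ω - 1| / (s : ℝ)) ∂μ := step1
      _ = ENNReal.ofReal T := by rw [step2, step3]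
  have hKτint : Integrable (fun ω => K (τ ω) ω) μ := by
    refine ⟨hKτm.aestronglyMeasurable, ?_⟩
    rw [hasFiniteIntegral_iff_ofReal (ae_of_all _ fun ω => hKnn (τ ω) ω)]
    exact lt_of_le_of_lt hKτ_lint ENNReal.ofReal_lt_top
  have hKτ_le : ∫ ω, K (τ ω) ω ∂μ ≤ T := by
    rw [integral_eq_lintegral_of_nonneg_ae (ae_of_all _ fun ω => hKnn (τ ω) ω)
      hKτm.aestronglyMeasurable]
    exact ENNReal.toReal_le_of_le_ofReal hTnn hKτ_lint
  -- pointwise bound on V at τ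
  have hVbound : ∀ ω, |V (τ ω) ω| ≤ K (τ ω) ω + Real.log (τ ω : ℝ) + 1 := by
    intro ω
    have h1 : |V (τ ω) ω| ≤ ∑ s ∈ Finset.Icc 1 (τ ω), |v s ω| / (s : ℝ) := by
      refine (Finset.abs_sum_le_sum_abs _ _).trans_eq ?_
      refine Finset.sum_congr rfl fun s _ => ?_
      rw [abs_div, Nat.abs_cast]
    have h2 : ∑ s ∈ Finset.Icc 1 (τ ω), |v s ω| / (s : ℝ)
        ≤ K (τ ω) ω + ∑ s ∈ Finset.Icc 1 (τ ω), (1 : ℝ) / s := by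
      rw [hKdef]
      simp only
      rw [← Finset.sum_add_distrib]
      refine Finset.sum_le_sum fun s hs => ?_
      have hs1 : 1 ≤ s := (Finset.mem_Icc.mp hs).1
      have hcast : (0 : ℝ) < (s : ℝ) := by exact_mod_cast hs1
      rw [← add_div]
      have hnum : |v s ω| ≤ |v s ω - 1| + 1 := by
        have := abs_sub_abs_le_abs_sub (v s ω) 1
        simp only [abs_one] at this
        linarith
      gcongr
    have h3 : ∑ s ∈ Finset.Icc 1 (τ ω), (1 : ℝ) / s ≤ Real.log (τ ω : ℝ) + 1 :=
      aux_harmonic (τ ω)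
    linarith
  have hGm : Measurable (fun ω => V (τ ω) ω) := aux_meas_stopped hVm hτm
  have hGbnd_int : Integrable (fun ω => K (τ ω) ω + Real.log (τ ω : ℝ) + 1) μ :=
    (hKτint.add hlogint).add (integrable_const 1)
  have hGint : Integrable (fun ω => V (τ ω) ω) μ := by
    refine Integrable.mono' hGbnd_int hGm.aestronglyMeasurable (ae_of_all _ fun ω => ?_)
    rw [Real.norm_eq_abs]
    exact hVbound ω
  have hGnn : 0 ≤ ∫ ω, V (τ ω) ω ∂μ := by
    refine integral_nonneg_of_ae ?_
    filter_upwards [hvallnn] with ω hω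
    exact Finset.sum_nonneg fun s _ => div_nonneg (hω s) (Nat.cast_nonneg s)
  -- conclusion 2
  have hconc2 : ∫ ω, V (τ ω) ω ∂μ ≤ (∫ ω, Real.log (τ ω : ℝ) ∂μ) + T + 1 := by
    have h1 : ∫ ω, V (τ ω) ω ∂μ ≤ ∫ ω, (K (τ ω) ω + Real.log (τ ω : ℝ) + 1) ∂μ := by
      refine integral_mono hGint hGbnd_int fun ω => ?_
      exact (le_abs_self _).trans (hVbound ω)
    have hKlog : Integrable (fun ω => K (τ ω) ω + Real.log (τ ω : ℝ)) μ :=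
      hKτint.add hlogint
    have h2 : ∫ ω, (K (τ ω) ω + Real.log (τ ω : ℝ) + 1) ∂μ
        = (∫ ω, K (τ ω) ω ∂μ) + (∫ ω, Real.log (τ ω : ℝ) ∂μ) + 1 := by
      rw [integral_add hKlog (integrable_const 1), integral_add hKτint hlogint]
      simp
    rw [h2] at h1
    linarith
  -- conclusion 1 via Fatou
  have hUVle : ∀ n : ℕ, ∫ ω, U (min (τ ω) (n + 1)) ω ∂μ ≤ ∫ ω, V (τ ω) ω ∂μ := by
    intro n
    have h1 : ∫ ω, (U (min (τ ω) (n + 1)) ω - V (min (τ ω) (n + 1)) ω) ∂μ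
        = (∫ ω, U (min (τ ω) (n + 1)) ω ∂μ) - ∫ ω, V (min (τ ω) (n + 1)) ω ∂μ :=
      integral_sub (hUτn_int n) (hVτn_int n)
    have h2 : ∫ ω, V (min (τ ω) (n + 1)) ω ∂μ ≤ ∫ ω, V (τ ω) ω ∂μ := by
      refine integral_mono_ae (hVτn_int n) hGint ?_
      filter_upwards [hvallnn] with ω hω
      exact Finset.sum_le_sum_of_subset_of_nonneg
        (Finset.Icc_subset_Icc le_rfl (min_le_left _ _))
        (fun s _ _ => div_nonneg (hω s) (Nat.cast_nonneg s))
    have h3 := hstop n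
    rw [h1] at h3
    linarith
  have hUτm : Measurable (fun ω => U (τ ω) ω) := aux_meas_stopped hUm hτm
  have hUmn : ∀ n : ℕ, Measurable (fun ω => U (min (τ ω) (n + 1)) ω) := fun n =>
    aux_meas_stopped hUm (hτm.min measurable_const)
  have hlim : ∀ ω, Tendsto (fun n : ℕ => U (min (τ ω) (n + 1)) ω) atTop (nhds (U (τ ω) ω)) := by
    intro ω
    refine tendsto_atTop_of_eventually_const (i₀ := τ ω) fun n hn => ?_
    rw [min_eq_left (by omega)]
  have key : ∫⁻ ω, ENNReal.ofReal (U (τ ω) ω) ∂μ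
      ≤ ENNReal.ofReal (∫ ω, V (τ ω) ω ∂μ) := by
    have e1 : ∫⁻ ω, ENNReal.ofReal (U (τ ω) ω) ∂μ
        = ∫⁻ ω, liminf (fun n : ℕ => ENNReal.ofReal (U (min (τ ω) (n + 1)) ω)) atTop ∂μ := by
      refine lintegral_congr fun ω => ?_
      exact ((ENNReal.continuous_ofReal.tendsto _).comp (hlim ω)).liminf_eq.symm
    have e2 : ∫⁻ ω, liminf (fun n : ℕ => ENNReal.ofReal (U (min (τ ω) (n + 1)) ω)) atTop ∂μ
        ≤ liminf (fun n : ℕ => ∫⁻ ω, ENNReal.ofReal (U (min (τ ω) (n + 1)) ω) ∂μ) atTop :=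
      lintegral_liminf_le fun n => ENNReal.measurable_ofReal.comp (hUmn n)
    have e3 : ∀ n : ℕ, ∫⁻ ω, ENNReal.ofReal (U (min (τ ω) (n + 1)) ω) ∂μ
        ≤ ENNReal.ofReal (∫ ω, V (τ ω) ω ∂μ) := by
      intro n
      rw [← ofReal_integral_eq_lintegral_ofReal (hUτn_int n)
        (ae_of_all _ fun ω => hUnn _ ω)]
      exact ENNReal.ofReal_le_ofReal (hUVle n)
    have e4 : liminf (fun n : ℕ => ∫⁻ ω, ENNReal.ofReal (U (min (τ ω) (n + 1)) ω) ∂μ) atTop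
        ≤ ENNReal.ofReal (∫ ω, V (τ ω) ω ∂μ) := by
      refine (Filter.liminf_le_liminf (Eventually.of_forall e3)).trans_eq ?_
      exact Filter.liminf_const _
    rw [e1]
    exact e2.trans e4
  have hUτint : Integrable (fun ω => U (τ ω) ω) μ := by
    refine ⟨hUτm.aestronglyMeasurable, ?_⟩
    rw [hasFiniteIntegral_iff_ofReal (ae_of_all _ fun ω => hUnn _ ω)]
    exact lt_of_le_of_lt key ENNReal.ofReal_lt_top
  have hconc1 : ∫ ω, U (τ ω) ω ∂μ ≤ ∫ ω, V (τ ω) ω ∂μ := by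
    rw [integral_eq_lintegral_of_nonneg_ae (ae_of_all _ fun ω => hUnn _ ω)
      hUτm.aestronglyMeasurable]
    exact ENNReal.toReal_le_of_le_ofReal hGnn key
  exact ⟨hconc1, hconc2, hjensen⟩
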